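/- Let Y be a real random variable whose CDF F satisfies F(Y) = c almost surely for some constant c. Then Y is almost surely constant. -/

import Mathlib

open MeasureTheory ProbabilityTheory
open Set

lemma key_aux (μ : Measure ℝ) [IsProbabilityMeasure μ] (S : Set ℝ)
    (hSm : MeasurableSet S) (hS : μ S = 1)
    (hconst : ∀ y ∈ S, ∀ y' ∈ S, μ (Iic y) = μ (Iic y')) :
    ∃ a : ℝ, μ {a} = 1 := by
  have hSne : S.Nonempty := by
    rcases S.eq_empty_or_nonempty with h | h
    · rw [h, measure_empty] at hS; exact absurd hS zero_ne_one
    · exact h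
  have hSc : μ Sᶜ = 0 := by
    rw [measure_compl hSm (measure_ne_top μ S), hS, measure_univ, tsub_self]
  -- For y1, y ∈ S, the measure of Ioc y1 y vanishes
  have hIoc : ∀ y1 ∈ S, ∀ y ∈ S, μ (Ioc y1 y) = 0 := by
    intro y1 hy1 y hy
    rcases le_or_gt y y1 with h | h
    · rw [Ioc_eq_empty (not_lt.mpr h), measure_empty]
    · have he : Ioc y1 y = Iic y \ Iic y1 := (Iic_sdiff_Iic).symm
      rw [he, measure_diff (Iic_subset_Iic.mpr h.le) measurableSet_Iic.nullMeasurableSet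
        (measure_ne_top μ _), hconst y hy y1 hy1, tsub_self]
  -- μ (S ∩ Ioi y1) = 0 for y1 ∈ S
  have hup : ∀ y1 ∈ S, μ (S ∩ Ioi y1) = 0 := by
    intro y1 hy1
    rcases (S ∩ Ioi y1).eq_empty_or_nonempty with h | h
    · rw [h, measure_empty]
    by_cases hb : BddAbove (S ∩ Ioi y1)
    · set b := sSup (S ∩ Ioi y1) with hbdef
      have hchoose : ∀ n : ℕ, ∃ y ∈ S ∩ Ioi y1, b - 1 / (n + 1) < y := by
        intro n
        apply exists_lt_of_lt_csSup h
        have : (0:ℝ) < 1 / (n+1) := by positivity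
        linarith
      choose f hf hflt using hchoose
      have hcover : S ∩ Ioi y1 ⊆ (⋃ n, Ioc y1 (f n)) ∪ ({b} ∩ S) := by
        intro x hx
        have hxb : x ≤ b := le_csSup hb hx
        rcases eq_or_lt_of_le hxb with rfl | hxlt
        · exact Or.inr ⟨rfl, hx.1⟩
        · obtain ⟨n, hn⟩ := exists_nat_one_div_lt (sub_pos.mpr hxlt)
          refine Or.inl (mem_iUnion.mpr ⟨n, hx.2, ?_⟩)
          have := hflt n
          have : b - 1 / (n+1) > b - (b - x) := by
            have : (1:ℝ) / (n+1) < b - x := hn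
            linarith
          simp only [sub_sub_cancel] at this
          linarith [hflt n]
      have hbS : μ ({b} ∩ S) = 0 := by
        by_cases hbs : b ∈ S
        · have hby1 : y1 < b := lt_of_lt_of_le h.some_mem.2 (le_csSup hb h.some_mem)
          have : ({b} : Set ℝ) ∩ S ⊆ Ioc y1 b := by
            rintro x ⟨rfl, -⟩; exact ⟨hby1, le_refl _⟩
          exact measure_mono_null this (hIoc y1 hy1 b hbs)
        · have : ({b} : Set ℝ) ∩ S = ∅ := by
            ext x; simp only [mem_inter_iff, mem_singleton_iff, mem_empty_iff_false, iff_false]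
            rintro ⟨rfl, hxs⟩; exact hbs hxs
          rw [this, measure_empty]
      refine measure_mono_null hcover ?_
      refine le_antisymm ?_ zero_le
      refine le_trans (measure_union_le _ _) ?_
      rw [hbS, add_zero]
      refine le_trans (measure_iUnion_le _) ?_
      simp [fun n => hIoc y1 hy1 (f n) (hf n).1]
    · -- unbounded above
      have hchoose : ∀ n : ℕ, ∃ y ∈ S ∩ Ioi y1, (n : ℝ) < y := by
        intro n
        rcases not_bddAbove_iff.mp hb (n : ℝ) with ⟨y, hy, hny⟩
        exact ⟨y, hy, hny⟩
      choose f hf hflt using hchoose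
      have hcover : S ∩ Ioi y1 ⊆ ⋃ n, Ioc y1 (f n) := by
        intro x hx
        obtain ⟨n, hn⟩ := exists_nat_gt x
        exact mem_iUnion.mpr ⟨n, hx.2, (lt_trans hn (hflt n)).le⟩
      refine measure_mono_null hcover ?_
      refine le_antisymm (le_trans (measure_iUnion_le _) ?_) zero_le
      simp [fun n => hIoc y1 hy1 (f n) (hf n).1]
  -- every y ∈ S satisfies μ (Iic y) = 1
  have hone : ∀ y ∈ S, μ (Iic y) = 1 := by
    intro y hy
    have hIoi : μ (Ioi y) = 0 := by
      have hsub : Ioi y ⊆ (S ∩ Ioi y) ∪ Sᶜ := by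
        intro x hx
        by_cases hxs : x ∈ S
        · exact Or.inl ⟨hxs, hx⟩
        · exact Or.inr hxs
      refine measure_mono_null hsub ?_
      refine le_antisymm (le_trans (measure_union_le _ _) ?_) zero_le
      rw [hup y hy, hSc, add_zero]
    have := measure_compl (measurableSet_Iic (a := y)) (measure_ne_top μ _)
    rw [compl_Iic, hIoi, measure_univ] at this
    have h1 : μ (Iic y) ≤ 1 := prob_le_one
    rcases eq_or_lt_of_le h1 with h | h
    · exact h
    · exact absurd (tsub_eq_zero_iff_le.mp this.symm) (not_le.mpr h)
  -- S is bounded below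
  have hbdd : BddBelow S := by
    by_contra hb
    have hchoose : ∀ n : ℕ, ∃ y ∈ S, y < -(n:ℝ) := by
      intro n
      rcases not_bddBelow_iff.mp hb (-(n:ℝ)) with ⟨y, hy, hny⟩
      exact ⟨y, hy, hny⟩
    choose f hf hflt using hchoose
    have h1 : ∀ n : ℕ, μ (Iic (-(n:ℝ))) = 1 := by
      intro n
      refine le_antisymm prob_le_one ?_
      rw [← hone (f n) (hf n)]
      exact measure_mono (Iic_subset_Iic.mpr (hflt n).le)
    have hinter : ⋂ n : ℕ, Iic (-(n:ℝ)) = (∅ : Set ℝ) := by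
      ext x
      simp only [mem_iInter, mem_Iic, mem_empty_iff_false, iff_false, not_forall, not_le]
      obtain ⟨n, hn⟩ := exists_nat_gt (-x)
      exact ⟨n, by linarith⟩
    have htend := tendsto_measure_iInter_atTop (μ := μ) (s := fun n : ℕ => Iic (-(n:ℝ)))
      (fun n => measurableSet_Iic.nullMeasurableSet)
      (fun m n hmn => Iic_subset_Iic.mpr (by exact_mod_cast neg_le_neg (Nat.cast_le.mpr hmn)))
      ⟨0, measure_ne_top μ _⟩
    rw [hinter, measure_empty] at htend
    have : Filter.Tendsto (fun _ : ℕ => (1 : ENNReal)) Filter.atTop (nhds 0) := by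
      have htend' : Filter.Tendsto (fun n : ℕ => μ (Iic (-(n:ℝ)))) Filter.atTop (nhds 0) := htend
      simp only [h1] at htend'
      exact htend'
    have := tendsto_nhds_unique this tendsto_const_nhds
    exact one_ne_zero this.symm
  -- the atom
  refine ⟨sInf S, ?_⟩
  set a := sInf S with ha
  have hIio : μ (Iio a) = 0 := by
    refine measure_mono_null (fun x hx => ?_) hSc
    intro hxs
    exact absurd (csInf_le hbdd hxs) (not_le.mpr hx)
  have hIoi : μ (Ioi a) = 0 := by
    have hchoose : ∀ n : ℕ, ∃ y ∈ S, y < a + 1 / (n + 1) := by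
      intro n
      apply exists_lt_of_csInf_lt hSne
      have : (0:ℝ) < 1 / (n+1) := by positivity
      linarith
    choose f hf hflt using hchoose
    have hcover : Ioi a ⊆ ⋃ n, Ioi (f n) := by
      intro x hx
      obtain ⟨n, hn⟩ := exists_nat_one_div_lt (sub_pos.mpr (mem_Ioi.mp hx))
      refine mem_iUnion.mpr ⟨n, ?_⟩
      have := hflt n
      simp only [mem_Ioi]
      linarith
    have hIoif : ∀ n, μ (Ioi (f n)) = 0 := by
      intro n
      have := measure_compl (measurableSet_Iic (a := f n)) (measure_ne_top μ _)
      rw [compl_Iic, hone (f n) (hf n), measure_univ, tsub_self] at this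
      exact this
    refine measure_mono_null hcover ?_
    refine le_antisymm (le_trans (measure_iUnion_le _) ?_) zero_le
    simp [hIoif]
  have hcompl : μ ({a}ᶜ) = 0 := by
    rw [← Iio_union_Ioi]
    refine le_antisymm (le_trans (measure_union_le _ _) ?_) zero_le
    rw [hIio, hIoi, add_zero]
  have := measure_compl (measurableSet_singleton a) (measure_ne_top μ _)
  rw [hcompl, measure_univ] at this
  have h1 : μ {a} ≤ 1 := prob_le_one
  rcases eq_or_lt_of_le h1 with h | h
  · exact h
  · exact absurd (tsub_eq_zero_iff_le.mp this.symm) (not_le.mpr h)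


/-- If the CDF `F` of a real random variable `Y` satisfies `F(Y) = c` almost
surely for some constant `c`, then `Y` is almost surely constant. -/
theorem stmt_19 {Ω : Type*} [MeasureSpace Ω] [IsProbabilityMeasure (ℙ : Measure Ω)]
    (Y : Ω → ℝ) (hY : Measurable Y)
    (F : ℝ → ℝ) (hF : ∀ t, F t = (ℙ {ω | Y ω ≤ t}).toReal)
    (c : ℝ) (hc : ∀ᵐ ω ∂(ℙ : Measure Ω), F (Y ω) = c) :
    ∃ y₀ : ℝ, ℙ {ω | Y ω = y₀} = 1 := by
  set μ := (ℙ : Measure Ω).map Y with hμ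
  have : IsProbabilityMeasure μ := Measure.isProbabilityMeasure_map hY.aemeasurable
  have hmap : ∀ t : ℝ, μ (Iic t) = ℙ {ω | Y ω ≤ t} := by
    intro t
    rw [hμ, Measure.map_apply hY measurableSet_Iic]
    rfl
  have hFmono : Monotone F := by
    intro s t hst
    rw [hF s, hF t]
    refine ENNReal.toReal_le_toReal (measure_ne_top _ _) (measure_ne_top _ _) |>.mpr ?_
    exact measure_mono fun ω hω => le_trans hω hst
  set S : Set ℝ := {y | F y = c} with hSdef
  have hSm : MeasurableSet S := hFmono.measurable (measurableSet_singleton c)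
  have hpre : Y ⁻¹' S = {ω | F (Y ω) = c} := rfl
  have hμS : μ S = 1 := by
    rw [hμ, Measure.map_apply hY hSm, hpre]
    have hmeas : MeasurableSet {ω | F (Y ω) = c} :=
      (hFmono.measurable.comp hY) (measurableSet_singleton c)
    have hcompl : ℙ {ω | F (Y ω) = c}ᶜ = 0 := by
      rw [ae_iff] at hc
      simpa [Set.compl_setOf] using hc
    have := measure_compl (μ := (ℙ : Measure Ω)) hmeas (measure_ne_top _ _)
    rw [hcompl, measure_univ] at this
    have h1 : ℙ {ω | F (Y ω) = c} ≤ 1 := prob_le_one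
    rcases eq_or_lt_of_le h1 with h | h
    · exact h
    · exact absurd (tsub_eq_zero_iff_le.mp this.symm) (not_le.mpr h)
  have hconst : ∀ y ∈ S, ∀ y' ∈ S, μ (Iic y) = μ (Iic y') := by
    intro y hy y' hy'
    have h1 : F y = F y' := by rw [hy, hy']
    rw [hF y, hF y', ← hmap y, ← hmap y'] at h1
    exact (ENNReal.toReal_eq_toReal_iff' (measure_ne_top _ _) (measure_ne_top _ _)).mp h1
  obtain ⟨a, ha⟩ := key_aux μ S hSm hμS hconst
  refine ⟨a, ?_⟩
  rw [hμ, Measure.map_apply hY (measurableSet_singleton a)] at ha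
  exact ha
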